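/- (Theorem 1, equivalence of statements 2 and 3.) A pair (x*, Λ*) ∈ Ω × (ℝ^M_+)^N is a saddle point of the modified Lagrangian L̃ on Ω × (ℝ^M_+)^N if and only if Λ* = (λ*, …, λ*) has all N blocks equal to some common λ* ∈ ℝ^M_+ and (x*, λ*) is a saddle point of the original Lagrangian L on Ω × ℝ^M_+. -/

import Mathlib

open scoped RealInnerProductSpace BigOperators


open Finset in
lemma stmt0_dart_sum {N : ℕ} (G : SimpleGraph (Fin N)) [DecidableRel G.Adj]
    (F : Fin N → Fin N → ℝ) :
    ∑ d : G.Dart, F d.fst d.snd = ∑ i, ∑ j ∈ G.neighborFinset i, F i j := by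
  classical
  have h1 : ∑ d : G.Dart, F d.fst d.snd
      = ∑ p ∈ (univ : Finset (Fin N × Fin N)).filter (fun p => G.Adj p.1 p.2), F p.1 p.2 :=
    Finset.sum_bij' (fun d _ => d.toProd) (fun p hp => ⟨p, (mem_filter.mp hp).2⟩)
      (fun d _ => mem_filter.mpr ⟨mem_univ _, d.adj⟩) (fun p hp => mem_univ _)
      (fun d _ => rfl) (fun p hp => rfl) (fun d _ => rfl)
  rw [h1, Finset.sum_filter, Fintype.sum_prod_type]
  refine Finset.sum_congr rfl fun i _ => ?_
  rw [SimpleGraph.neighborFinset_eq_filter, Finset.sum_filter]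

open Finset in
lemma stmt0_edge_sum {N : ℕ} (G : SimpleGraph (Fin N)) [DecidableRel G.Adj]
    (H : Sym2 (Fin N) → ℝ) :
    ∑ d : G.Dart, H d.edge = 2 * ∑ e ∈ G.edgeFinset, H e := by
  classical
  calc ∑ d : G.Dart, H d.edge
      = ∑ e ∈ G.edgeFinset, ∑ d ∈ univ.filter (fun d : G.Dart => d.edge = e), H d.edge :=
        (Finset.sum_fiberwise_of_maps_to
          (fun d _ => SimpleGraph.mem_edgeFinset.mpr d.edge_mem) _).symm
    _ = ∑ e ∈ G.edgeFinset, 2 * H e := by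
        refine Finset.sum_congr rfl fun e he => ?_
        have h1 : ∀ d ∈ univ.filter (fun d : G.Dart => d.edge = e), H d.edge = H e := by
          intro d hd; rw [(Finset.mem_filter.mp hd).2]
        rw [Finset.sum_congr rfl h1, Finset.sum_const]
        have hcard := G.dart_edge_fiber_card e (SimpleGraph.mem_edgeFinset.mp he)
        have : (univ.filter (fun d : G.Dart => d.edge = e)).card = 2 := by
          convert hcard using 2
        rw [this]; simp [two_mul]
    _ = 2 * ∑ e ∈ G.edgeFinset, H e := by rw [Finset.mul_sum]

lemma stmt0_walk_bound {N : ℕ} {G : SimpleGraph (Fin N)}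
    (dd : Fin N → Fin N → ℝ) (D : Sym2 (Fin N) → ℝ)
    (h0 : ∀ a, dd a a = 0)
    (htri : ∀ a b c, dd a c ≤ dd a b + dd b c)
    (hDd : ∀ a b, G.Adj a b → dd a b ≤ D s(a, b)) :
    ∀ {a b : Fin N} (w : G.Walk a b), dd a b ≤ (w.edges.map D).sum := by
  intro a b w
  induction w with
  | nil => simpa using (h0 _).le
  | @cons u c v h p ih =>
      rw [SimpleGraph.Walk.edges_cons, List.map_cons, List.sum_cons]
      calc dd u v ≤ dd u c + dd c v := htri u c v
        _ ≤ D s(u, c) + (p.edges.map D).sum := add_le_add (hDd u c h) ih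

open Finset in
lemma stmt0_dd_le {N : ℕ} {G : SimpleGraph (Fin N)} [DecidableRel G.Adj] (hG : G.Connected)
    (dd : Fin N → Fin N → ℝ) (D : Sym2 (Fin N) → ℝ)
    (h0 : ∀ a, dd a a = 0)
    (htri : ∀ a b c, dd a c ≤ dd a b + dd b c)
    (hDd : ∀ a b, G.Adj a b → dd a b ≤ D s(a, b))
    (hD0 : ∀ e, 0 ≤ D e) (a b : Fin N) :
    dd a b ≤ ∑ e ∈ G.edgeFinset, D e := by
  classical
  obtain ⟨w⟩ := hG.preconnected a b
  have hnd : (w.toPath : G.Walk a b).edges.Nodup := w.toPath.2.edges_nodup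
  have h1 : dd a b ≤ ((w.toPath : G.Walk a b).edges.map D).sum :=
    stmt0_walk_bound dd D h0 htri hDd _
  have h2 : ((w.toPath : G.Walk a b).edges.map D).sum
      = ∑ e ∈ (w.toPath : G.Walk a b).edges.toFinset, D e :=
    (List.sum_toFinset _ hnd).symm
  have h3 : (w.toPath : G.Walk a b).edges.toFinset ⊆ G.edgeFinset := by
    intro e he
    rw [List.mem_toFinset] at he
    exact SimpleGraph.mem_edgeFinset.mpr ((w.toPath : G.Walk a b).edges_subset_edgeSet he)
  calc dd a b ≤ _ := h1
    _ = _ := h2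
    _ ≤ _ := Finset.sum_le_sum_of_subset_of_nonneg h3 (fun e _ _ => hD0 e)

open Finset in
lemma stmt0_graph {N : ℕ} {G : SimpleGraph (Fin N)} [DecidableRel G.Adj] (hG : G.Connected)
    (dd : Fin N → Fin N → ℝ)
    (hsymm : ∀ a b, dd a b = dd b a)
    (h0 : ∀ a, dd a a = 0)
    (hnn : ∀ a b, 0 ≤ dd a b)
    (htri : ∀ a b c, dd a c ≤ dd a b + dd b c)
    (a b : Fin N) :
    dd a b ≤ (1 / 2 : ℝ) * ∑ i, ∑ j ∈ G.neighborFinset i, dd i j := by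
  classical
  set D : Sym2 (Fin N) → ℝ := Sym2.lift ⟨dd, hsymm⟩ with hD
  have hDmk : ∀ x y, D s(x, y) = dd x y := fun x y => by rw [hD]; simp
  have hedge : ∀ d : G.Dart, D d.edge = dd d.fst d.snd := fun d => hDmk d.fst d.snd
  have hD0 : ∀ e : Sym2 (Fin N), 0 ≤ D e := fun e =>
    Sym2.ind (fun x y => by rw [hDmk]; exact hnn x y) e
  have h2 : 2 * ∑ e ∈ G.edgeFinset, D e = ∑ i, ∑ j ∈ G.neighborFinset i, dd i j := by
    calc 2 * ∑ e ∈ G.edgeFinset, D e = ∑ d : G.Dart, D d.edge := (stmt0_edge_sum G D).symm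
      _ = ∑ d : G.Dart, dd d.fst d.snd := Finset.sum_congr rfl fun d _ => hedge d
      _ = _ := stmt0_dart_sum G dd
  have h3 : dd a b ≤ ∑ e ∈ G.edgeFinset, D e :=
    stmt0_dd_le hG dd D h0 htri (fun x y _ => (hDmk x y).ge) hD0 a b
  linarith

/-- (Theorem 1, equivalence of statements 2 and 3.) Under the standing assumptions
(compact convex local sets, strictly convex locally Lipschitz costs, convex locally
Lipschitz constraint maps on open sets containing the local sets, Slater's condition,
connected undirected graph, `K > √N K₀`): a pair `(x*, Λ*) ∈ Ω × (ℝ^M_+)^N` is a saddle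
point of the modified Lagrangian `L̃` on `Ω × (ℝ^M_+)^N` if and only if `Λ* = (λ*,…,λ*)`
for some common `λ* ∈ ℝ^M_+` and `(x*, λ*)` is a saddle point of the original Lagrangian
`L` on `Ω × ℝ^M_+`. -/
theorem stmt_0 (N M : ℕ) (hN : 0 < N) (n : Fin N → ℕ)
    (G : SimpleGraph (Fin N)) [DecidableRel G.Adj] (hG : G.Connected)
    (Ω U : ∀ i, Set (EuclideanSpace ℝ (Fin (n i))))
    (f : ∀ i, EuclideanSpace ℝ (Fin (n i)) → ℝ)
    (g : ∀ i, EuclideanSpace ℝ (Fin (n i)) → EuclideanSpace ℝ (Fin M))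
    (hΩcomp : ∀ i, IsCompact (Ω i)) (hΩconv : ∀ i, Convex ℝ (Ω i))
    (hΩne : ∀ i, (Ω i).Nonempty)
    (hUopen : ∀ i, IsOpen (U i)) (hΩU : ∀ i, Ω i ⊆ U i)
    (hf : ∀ i, StrictConvexOn ℝ (U i) (f i)) (hflip : ∀ i, LocallyLipschitzOn (U i) (f i))
    (hg : ∀ i k, ConvexOn ℝ (U i) fun z => g i z k)
    (hglip : ∀ i, LocallyLipschitzOn (U i) (g i))
    -- Slater's constraint qualification
    (xbar : ∀ i, EuclideanSpace ℝ (Fin (n i)))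
    (hxbar : xbar ∈ intrinsicInterior ℝ
      {x : ∀ i, EuclideanSpace ℝ (Fin (n i)) | ∀ i, x i ∈ Ω i})
    (hslater : ∀ k, ∑ i, g i (xbar i) k < 0)
    -- the penalty constant
    (K₀ K : ℝ)
    (hK₀ : IsGreatest {r | ∃ x : ∀ i, EuclideanSpace ℝ (Fin (n i)),
      (∀ i, x i ∈ Ω i) ∧ r = Real.sqrt (∑ i, ‖g i (x i)‖ ^ 2)} K₀)
    (hK : Real.sqrt N * K₀ < K)
    -- the consensus penalty and the two Lagrangians
    (φ : (Fin N → EuclideanSpace ℝ (Fin M)) → ℝ)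
    (hφ : ∀ lam, φ lam = (1 / 2) * ∑ i, ∑ j ∈ G.neighborFinset i, ∑ m, |lam i m - lam j m|)
    (Lt : (∀ i, EuclideanSpace ℝ (Fin (n i))) → (Fin N → EuclideanSpace ℝ (Fin M)) → ℝ)
    (hLt : ∀ x lam, Lt x lam = (∑ i, (f i (x i) + ⟪lam i, g i (x i)⟫)) - K * φ lam)
    (L : (∀ i, EuclideanSpace ℝ (Fin (n i))) → EuclideanSpace ℝ (Fin M) → ℝ)
    (hL : ∀ x μ, L x μ = (∑ i, f i (x i)) + ⟪μ, ∑ i, g i (x i)⟫)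
    -- the candidate pair
    (xs : ∀ i, EuclideanSpace ℝ (Fin (n i))) (Λs : Fin N → EuclideanSpace ℝ (Fin M))
    (hxs : ∀ i, xs i ∈ Ω i) (hΛs : ∀ i m, 0 ≤ Λs i m) :
    (∀ x : ∀ i, EuclideanSpace ℝ (Fin (n i)), (∀ i, x i ∈ Ω i) →
        ∀ lam : Fin N → EuclideanSpace ℝ (Fin M), (∀ i m, 0 ≤ lam i m) →
          Lt xs lam ≤ Lt xs Λs ∧ Lt xs Λs ≤ Lt x Λs) ↔
      ∃ lams : EuclideanSpace ℝ (Fin M), (∀ m, 0 ≤ lams m) ∧ (∀ i, Λs i = lams) ∧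
        ∀ x : ∀ i, EuclideanSpace ℝ (Fin (n i)), (∀ i, x i ∈ Ω i) →
          ∀ μ : EuclideanSpace ℝ (Fin M), (∀ m, 0 ≤ μ m) →
            L xs μ ≤ L xs lams ∧ L xs lams ≤ L x lams := by
  classical
  have i₀ : Fin N := ⟨0, hN⟩
  -- basic facts
  have hφnn : ∀ lam, 0 ≤ φ lam := by
    intro lam; rw [hφ]; positivity
  have hgK : Real.sqrt (∑ i, ‖g i (xs i)‖ ^ 2) ≤ K₀ := hK₀.2 ⟨xs, hxs, rfl⟩
  have hK₀nn : 0 ≤ K₀ := le_trans (Real.sqrt_nonneg _) hgK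
  -- distance bound from the graph structure
  have hdd_le : ∀ lam : Fin N → EuclideanSpace ℝ (Fin M), ∀ a b : Fin N,
      (∑ m, |lam a m - lam b m|) ≤ φ lam := by
    intro lam a b
    rw [hφ lam]
    exact stmt0_graph hG (fun x y => ∑ m, |lam x m - lam y m|)
      (fun x y => Finset.sum_congr rfl fun m _ => abs_sub_comm _ _)
      (fun x => by simp)
      (fun x y => Finset.sum_nonneg fun m _ => abs_nonneg _)
      (fun x y z => le_trans (Finset.sum_le_sum fun m _ => abs_sub_le _ _ _)
        (le_of_eq (Finset.sum_add_distrib)))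
      a b
  -- ℓ¹ bound on euclidean norm
  have hnorm1 : ∀ v : EuclideanSpace ℝ (Fin M), ‖v‖ ≤ ∑ m, |v m| := by
    intro v
    rw [EuclideanSpace.norm_eq]
    have h1 : ∑ m, ‖v m‖ ^ 2 ≤ (∑ m, |v m|) ^ 2 := by
      refine le_trans (le_of_eq ?_) (Finset.sum_sq_le_sq_sum_of_nonneg fun m _ => abs_nonneg (v m))
      simp [Real.norm_eq_abs]
    calc Real.sqrt (∑ m, ‖v m‖ ^ 2) ≤ Real.sqrt ((∑ m, |v m|) ^ 2) := Real.sqrt_le_sqrt h1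
      _ = ∑ m, |v m| := Real.sqrt_sq (by positivity)
  -- Cauchy–Schwarz type bound
  have hsg : ∑ i, ‖g i (xs i)‖ ≤ Real.sqrt N * K₀ := by
    have h1 : (∑ i, ‖g i (xs i)‖) ^ 2 ≤ (N : ℝ) * ∑ i, ‖g i (xs i)‖ ^ 2 := by
      simpa using sq_sum_le_card_mul_sum_sq
        (s := (Finset.univ : Finset (Fin N))) (f := fun i => ‖g i (xs i)‖)
    calc ∑ i, ‖g i (xs i)‖
        = Real.sqrt ((∑ i, ‖g i (xs i)‖) ^ 2) := (Real.sqrt_sq (by positivity)).symm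
      _ ≤ Real.sqrt ((N : ℝ) * ∑ i, ‖g i (xs i)‖ ^ 2) := Real.sqrt_le_sqrt h1
      _ = Real.sqrt N * Real.sqrt (∑ i, ‖g i (xs i)‖ ^ 2) := Real.sqrt_mul (by positivity) _
      _ ≤ Real.sqrt N * K₀ := mul_le_mul_of_nonneg_left hgK (Real.sqrt_nonneg _)
  -- the key estimate
  have hkey : ∀ lam : Fin N → EuclideanSpace ℝ (Fin M),
      ∑ i, ⟪lam i, g i (xs i)⟫ ≤ ⟪lam i₀, ∑ i, g i (xs i)⟫ + Real.sqrt N * K₀ * φ lam := by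
    intro lam
    have hsplit : ∑ i, ⟪lam i, g i (xs i)⟫
        = ⟪lam i₀, ∑ i, g i (xs i)⟫ + ∑ i, ⟪lam i - lam i₀, g i (xs i)⟫ := by
      rw [inner_sum, ← Finset.sum_add_distrib]
      refine Finset.sum_congr rfl fun i _ => ?_
      rw [inner_sub_left]; ring
    rw [hsplit]
    refine add_le_add (le_refl _) ?_
    have h1 : ∀ i, ⟪lam i - lam i₀, g i (xs i)⟫ ≤ φ lam * ‖g i (xs i)‖ := by
      intro i
      calc ⟪lam i - lam i₀, g i (xs i)⟫ ≤ ‖lam i - lam i₀‖ * ‖g i (xs i)‖ :=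
            real_inner_le_norm _ _
        _ ≤ φ lam * ‖g i (xs i)‖ := by
            refine mul_le_mul_of_nonneg_right ?_ (norm_nonneg _)
            calc ‖lam i - lam i₀‖ ≤ ∑ m, |(lam i - lam i₀) m| := hnorm1 _
              _ = ∑ m, |lam i m - lam i₀ m| := rfl
              _ ≤ φ lam := hdd_le lam i i₀
    calc ∑ i, ⟪lam i - lam i₀, g i (xs i)⟫ ≤ ∑ i, φ lam * ‖g i (xs i)‖ :=
          Finset.sum_le_sum fun i _ => h1 i
      _ = φ lam * ∑ i, ‖g i (xs i)‖ := (Finset.mul_sum _ _ _).symm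
      _ ≤ φ lam * (Real.sqrt N * K₀) := mul_le_mul_of_nonneg_left hsg (hφnn lam)
      _ = Real.sqrt N * K₀ * φ lam := by ring
  -- Lt on consensus multipliers coincides with L
  have hLt_cons : ∀ x, ∀ μ : EuclideanSpace ℝ (Fin M), Lt x (fun _ => μ) = L x μ := by
    intro x μ
    have hφc : φ (fun _ => μ) = 0 := by rw [hφ]; simp
    rw [hLt, hL, hφc, mul_zero, sub_zero, Finset.sum_add_distrib, inner_sum]
  -- upper bound on Lt
  have hLt_bound : ∀ lam : Fin N → EuclideanSpace ℝ (Fin M),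
      Lt xs lam ≤ L xs (lam i₀) + (Real.sqrt N * K₀ - K) * φ lam := by
    intro lam
    rw [hLt, hL, Finset.sum_add_distrib]
    have := hkey lam
    nlinarith [hkey lam]
  constructor
  · -- forward direction
    intro hsad
    have h1 := (hsad xs hxs (fun _ => Λs i₀) (fun _ m => hΛs i₀ m)).1
    have h2 : Lt xs Λs ≤ L xs (Λs i₀) + (Real.sqrt N * K₀ - K) * φ Λs := hLt_bound Λs
    have h3 : Lt xs (fun _ => Λs i₀) = L xs (Λs i₀) := hLt_cons xs (Λs i₀)
    have hφΛ : φ Λs = 0 := by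
      have hle : (K - Real.sqrt N * K₀) * φ Λs ≤ 0 := by nlinarith
      have hnn := hφnn Λs
      have h4 : φ Λs ≤ 0 := by nlinarith
      linarith
    have hcons : ∀ i, Λs i = Λs i₀ := by
      intro i
      have h5 : (∑ m, |Λs i m - Λs i₀ m|) ≤ 0 := by
        rw [← hφΛ]; exact hdd_le Λs i i₀
      have h6 : ∀ m ∈ Finset.univ, |Λs i m - Λs i₀ m| = 0 :=
        (Finset.sum_eq_zero_iff_of_nonneg (fun m _ => abs_nonneg _)).mp
          (le_antisymm h5 (Finset.sum_nonneg fun m _ => abs_nonneg _))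
      refine PiLp.ext fun m => ?_
      exact sub_eq_zero.mp (abs_eq_zero.mp (h6 m (Finset.mem_univ m)))
    have hΛeq : Λs = fun _ => Λs i₀ := funext hcons
    have hLtΛ : ∀ y, Lt y Λs = L y (Λs i₀) := by
      intro y
      conv_lhs => rw [hΛeq]
      exact hLt_cons y (Λs i₀)
    refine ⟨Λs i₀, fun m => hΛs i₀ m, hcons, ?_⟩
    intro x hx μ hμ
    have h7 := hsad x hx (fun _ => μ) (fun _ m => hμ m)
    constructor
    · calc L xs μ = Lt xs (fun _ => μ) := (hLt_cons xs μ).symm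
        _ ≤ Lt xs Λs := h7.1
        _ = L xs (Λs i₀) := hLtΛ xs
    · calc L xs (Λs i₀) = Lt xs Λs := (hLtΛ xs).symm
        _ ≤ Lt x Λs := h7.2
        _ = L x (Λs i₀) := hLtΛ x
  · -- backward direction
    rintro ⟨lams, hlnn, hlcons, hsadL⟩ x hx lam hlam
    have hΛeq : Λs = fun _ => lams := funext hlcons
    have hLtΛ : ∀ y, Lt y Λs = L y lams := by
      intro y
      conv_lhs => rw [hΛeq]
      exact hLt_cons y lams
    constructor
    · have h1 := hLt_bound lam
      have h2 : (Real.sqrt N * K₀ - K) * φ lam ≤ 0 :=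
        mul_nonpos_of_nonpos_of_nonneg (by linarith) (hφnn lam)
      have h3 := (hsadL xs hxs (lam i₀) (fun m => hlam i₀ m)).1
      rw [hLtΛ xs]; linarith
    · rw [hLtΛ xs, hLtΛ x]
      exact (hsadL x hx lams hlnn).2
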